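/- Let x₁,…,x_n, a₁,…,a_n be indeterminates over a field of characteristic 0. The system of algebraic equations a₁x₁ = y₁, a_j x_j = y_j b_j (j=2,…,n), 1/a₁ + 1/x₂ = 1/b₂, and 1/a_j + 1/x_{j+1} = 1/y_j + 1/b_{j+1} (j=2,…,n−1), for unknowns y₁,…,y_n, b₂,…,b_n, is equivalent to the recursive tropical row-insertion formulas: η₁ = ξ₁a₁, η_j = (η_{j−1}+ξ_j)a_j, y₁ = η₁, y_j = η_j/η_{j−1}, b_j = a_j x_j / y_j, where ξ_j = x₁⋯x_j and η_j = y₁⋯y_j. -/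

import Mathlib

lemma prod_split {K : Type*} [Field K] (f : ℕ → K) (j : ℕ) (hj : 2 ≤ j) :
    (∏ k ∈ Finset.Icc 1 j, f k) = (∏ k ∈ Finset.Icc 1 (j - 1), f k) * f j := by
  obtain ⟨m, rfl⟩ : ∃ m, j = m + 1 := ⟨j - 1, (Nat.succ_pred_eq_of_pos (by omega)).symm⟩
  simp only [Nat.add_sub_cancel]
  exact Finset.prod_Icc_succ_top (by omega) f

/-- the discrete-Toda-type system
`a₁x₁ = y₁`, `a_jx_j = y_jb_j`, `1/a₁ + 1/x₂ = 1/b₂`,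
`1/a_j + 1/x_{j+1} = 1/y_j + 1/b_{j+1}` is equivalent to the recursive tropical
row-insertion formulas `η₁ = ξ₁a₁`, `η_j = (η_{j−1} + ξ_j)a_j`, `b_j = a_jx_j/y_j`,
where `ξ_j = x₁⋯x_j` and `η_j = y₁⋯y_j`. -/
theorem tropical_rsk_stmt11 {K : Type*} [Field K] [CharZero K] {n : ℕ} (hn : 1 ≤ n)
    (x a y b : ℕ → K)
    (hx : ∀ j, 1 ≤ j → j ≤ n → x j ≠ 0) (ha : ∀ j, 1 ≤ j → j ≤ n → a j ≠ 0)
    (hy : ∀ j, 1 ≤ j → j ≤ n → y j ≠ 0) (hb : ∀ j, 2 ≤ j → j ≤ n → b j ≠ 0) :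
    ((a 1 * x 1 = y 1) ∧
     (∀ j, 2 ≤ j → j ≤ n → a j * x j = y j * b j) ∧
     (2 ≤ n → (a 1)⁻¹ + (x 2)⁻¹ = (b 2)⁻¹) ∧
     (∀ j, 2 ≤ j → j + 1 ≤ n →
       (a j)⁻¹ + (x (j + 1))⁻¹ = (y j)⁻¹ + (b (j + 1))⁻¹)) ↔
    ((∏ k ∈ Finset.Icc 1 1, y k) = (∏ k ∈ Finset.Icc 1 1, x k) * a 1 ∧
     (∀ j, 2 ≤ j → j ≤ n →
       (∏ k ∈ Finset.Icc 1 j, y k) =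
         ((∏ k ∈ Finset.Icc 1 (j - 1), y k) + ∏ k ∈ Finset.Icc 1 j, x k) * a j) ∧
     (∀ j, 2 ≤ j → j ≤ n → b j = a j * x j / y j)) := by
  have hP : ∀ j, 1 ≤ j → j ≤ n → (∏ k ∈ Finset.Icc 1 j, y k) ≠ 0 := by
    intro j _ hj
    refine Finset.prod_ne_zero_iff.2 fun k hk => ?_
    rw [Finset.mem_Icc] at hk
    exact hy k hk.1 (hk.2.trans hj)
  have hQ : ∀ j, 1 ≤ j → j ≤ n → (∏ k ∈ Finset.Icc 1 j, x k) ≠ 0 := by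
    intro j _ hj
    refine Finset.prod_ne_zero_iff.2 fun k hk => ?_
    rw [Finset.mem_Icc] at hk
    exact hx k hk.1 (hk.2.trans hj)
  simp only [Finset.Icc_self, Finset.prod_singleton]
  constructor
  · rintro ⟨h1, h2, h3, h4⟩
    have hbform : ∀ j, 2 ≤ j → j ≤ n → b j = a j * x j / y j := by
      intro j hj2 hjn
      have hyj := hy j (by omega) hjn
      field_simp
      linear_combination -(h2 j hj2 hjn)
    refine ⟨by linear_combination -h1, ?_, hbform⟩
    intro j hj2
    induction j, hj2 using Nat.le_induction with
    | base =>
      intro h2n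
      rw [prod_split y 2 le_rfl, prod_split x 2 le_rfl]
      simp only [show (2:ℕ)-1 = 1 from rfl, Finset.Icc_self, Finset.prod_singleton]
      have e2 := h2 2 le_rfl h2n
      have e3 := h3 h2n
      have hx2 := hx 2 (by omega) h2n
      have ha1 := ha 1 (by omega) (by omega)
      have hb2 := hb 2 le_rfl h2n
      field_simp at e3
      apply mul_left_cancel₀ hb2
      linear_combination (-(y 1)) * e2 + (-(a 2 * x 1)) * e3 + (-(a 2 * (x 2 - b 2))) * h1
    | succ j hj ih =>
      intro hjn
      have hjn' : j ≤ n := by omega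
      have ih' := ih hjn'
      rw [Finset.prod_Icc_succ_top (show 1 ≤ j + 1 by omega) y,
          Finset.prod_Icc_succ_top (show 1 ≤ j + 1 by omega) x,
          Nat.add_sub_cancel, prod_split y j hj, prod_split x j hj]
      rw [prod_split y j hj, prod_split x j hj] at ih'
      have e2 := h2 (j+1) (by omega) hjn
      have e4 := h4 j hj hjn
      have haj := ha j (by omega) hjn'
      have hyj := hy j (by omega) hjn'
      have hxj1 := hx (j+1) (by omega) hjn
      have hbj1 := hb (j+1) (by omega) hjn
      field_simp at e4
      apply mul_left_cancel₀ (mul_ne_zero hbj1 haj)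
      linear_combination (-(a j * (∏ k ∈ Finset.Icc 1 (j-1), y k) * y j)) * e2 +
        (-(a (j+1) * ∏ k ∈ Finset.Icc 1 (j-1), y k)) * e4 +
        (a (j+1) * b (j+1) * x (j+1)) * ih'
  · rintro ⟨g1, g2, g3⟩
    have h2 : ∀ j, 2 ≤ j → j ≤ n → a j * x j = y j * b j := by
      intro j hj2 hjn
      rw [g3 j hj2 hjn]
      field_simp [hy j (by omega) hjn]
    refine ⟨by linear_combination -g1, h2, ?_, ?_⟩
    · intro h2n
      have g22 := g2 2 le_rfl h2n
      rw [prod_split y 2 le_rfl, prod_split x 2 le_rfl] at g22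
      simp only [show (2:ℕ)-1 = 1 from rfl, Finset.Icc_self, Finset.prod_singleton] at g22
      rw [g3 2 le_rfl h2n]
      have hx1 := hx 1 (by omega) (by omega)
      have hx2 := hx 2 (by omega) h2n
      have ha1 := ha 1 (by omega) (by omega)
      have ha2 := ha 2 (by omega) h2n
      have hy2 := hy 2 (by omega) h2n
      have key : a 1 * y 2 = (a 1 + x 2) * a 2 := by
        apply mul_left_cancel₀ hx1
        linear_combination g22 + (a 2 - y 2) * g1
      field_simp
      linear_combination -key
    · intro j hj2 hj1n
      have hjn : j ≤ n := by omega
      have A := g2 j hj2 hjn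
      have B := g2 (j+1) (by omega) hj1n
      rw [Finset.prod_Icc_succ_top (show 1 ≤ j + 1 by omega) y,
          Finset.prod_Icc_succ_top (show 1 ≤ j + 1 by omega) x,
          Nat.add_sub_cancel] at B
      rw [prod_split y j hj2, prod_split x j hj2] at A B
      rw [g3 (j+1) (by omega) hj1n]
      set p := ∏ k ∈ Finset.Icc 1 (j-1), y k with hp
      set q := ∏ k ∈ Finset.Icc 1 (j-1), x k with hq
      have hpne : p ≠ 0 := hP (j-1) (by omega) (by omega)
      have haj := ha j (by omega) hjn
      have hyj := hy j (by omega) hjn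
      have hxj1 := hx (j+1) (by omega) hj1n
      have haj1 := ha (j+1) (by omega) hj1n
      have hyj1 := hy (j+1) (by omega) hj1n
      have key : y j * a (j+1) * x (j+1) + a j * y j * a (j+1)
          = a j * a (j+1) * x (j+1) + a j * y j * y (j+1) := by
        apply mul_left_cancel₀ hpne
        linear_combination -(a j) * B + a (j+1) * x (j+1) * A
      field_simp
      linear_combination key
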